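/- If a_n ∈ ℝ and b_n → ∞ satisfy ∫₀^{2π}∫₀^L (e^{b_n L x sinθ (2a_n − L x sinθ)} − 1)·(x sinθ)^{−1} dx dθ = 0 for all n (with the integrand extended continuously where x sinθ = 0), and |a_n| ≤ L², then a_n → 0. -/

import Mathlib

open Real Filter intervalIntegral

/-- The integrand `(e^{bLx sinθ(2a−Lx sinθ)}−1)/(x sinθ)`, extended by continuity
(with the conventional value `2ab`) where `x sinθ = 0`. -/
noncomputable def rodIntegrand (L b a x θ : ℝ) : ℝ :=
  if x * Real.sin θ = 0 then 2 * a * b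
  else (Real.exp (b * L * x * Real.sin θ * (2 * a - L * x * Real.sin θ)) - 1) /
    (x * Real.sin θ)


noncomputable def expRatio (t : ℝ) : ℝ := if t = 0 then 1 else (Real.exp t - 1) / t

lemma expRatio_eq_integral (t : ℝ) : expRatio t = ∫ s in (0:ℝ)..1, Real.exp (s * t) := by
  rcases eq_or_ne t 0 with rfl | ht
  · simp [expRatio]
  · rw [expRatio, if_neg ht, intervalIntegral.integral_comp_mul_right Real.exp ht,
      integral_exp]
    simp [smul_eq_mul]
    field_simp

lemma continuous_expRatio : Continuous expRatio := by
  have : Continuous fun t : ℝ => ∫ s in (0:ℝ)..1, Real.exp (s * t) := by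
    apply intervalIntegral.continuous_parametric_intervalIntegral_of_continuous'
    exact (Real.continuous_exp.comp (continuous_snd.mul continuous_fst))
  exact this.congr fun t => (expRatio_eq_integral t).symm

noncomputable def rodG (L b a u : ℝ) : ℝ :=
  b * L * (2 * a - L * u) * expRatio (b * L * u * (2 * a - L * u))

lemma continuous_rodG (L b a : ℝ) : Continuous (rodG L b a) := by
  unfold rodG
  exact (continuous_const.mul ((continuous_const.sub (continuous_const.mul continuous_id))) ).mul (continuous_expRatio.comp (by continuity))

lemma rodG_eq (L b a : ℝ) {u : ℝ} (hu : u ≠ 0) :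
    rodG L b a u = (Real.exp (b * L * u * (2 * a - L * u)) - 1) / u := by
  unfold rodG expRatio
  rcases eq_or_ne (b * L * u * (2 * a - L * u)) 0 with h | h
  · rw [if_pos h, h]
    have : b * L * (2 * a - L * u) = 0 := by
      rcases mul_eq_zero.1 h with h1 | h2
      · rcases mul_eq_zero.1 h1 with h3 | h4
        · simp [mul_eq_zero.1 h3]  -- b*L = 0 or u = 0
        · exact absurd h4 hu
      · simp [h2]
    simp [this]
  · rw [if_neg h]
    rw [eq_div_iff hu]
    have e : b * L * (2 * a - L * u) * ((Real.exp (b * L * u * (2 * a - L * u)) - 1) /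
        (b * L * u * (2 * a - L * u))) * u = (Real.exp (b * L * u * (2 * a - L * u)) - 1) *
        ((b * L * u * (2 * a - L * u)) / (b * L * u * (2 * a - L * u))) := by ring
    rw [e, div_self h, mul_one]

lemma rodG_lower {L b a ε : ℝ} (hL : 0 < L) (hε : 0 < ε) (ha : ε ≤ a) (hb : 0 < b)
    (u : ℝ) : -(L / (2 * ε)) ≤ rodG L b a u := by
  have hC : 0 < L / (2 * ε) := by positivity
  rcases eq_or_ne u 0 with rfl | hu
  · unfold rodG expRatio
    simp
    nlinarith [mul_pos (mul_pos hb hL) (by linarith : (0:ℝ) < 2*a), hC]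
  rw [rodG_eq L b a hu]
  rcases lt_trichotomy u 0 with hneg | h0 | hpos
  · have h2 : 0 < 2 * a - L * u := by nlinarith
    have ht : b * L * u * (2 * a - L * u) < 0 := by
      apply mul_neg_of_neg_of_pos _ h2
      exact mul_neg_of_pos_of_neg (by positivity) hneg
    have h3 : Real.exp (b * L * u * (2 * a - L * u)) - 1 < 0 := by
      have := Real.exp_lt_one_iff.2 ht; linarith
    have : 0 < (Real.exp (b * L * u * (2 * a - L * u)) - 1) / u :=
      div_pos_of_neg_of_neg h3 hneg
    linarith
  · exact absurd h0 hu
  · rcases le_or_gt 0 (2 * a - L * u) with h2 | h2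
    · have ht : 0 ≤ b * L * u * (2 * a - L * u) := by positivity
      have h3 : (1:ℝ) ≤ Real.exp (b * L * u * (2 * a - L * u)) := Real.one_le_exp ht
      have : 0 ≤ (Real.exp (b * L * u * (2 * a - L * u)) - 1) / u :=
        div_nonneg (by linarith) hpos.le
      linarith
    · have hu2 : 2 * ε / L ≤ u := by
        rw [div_le_iff₀ hL]; nlinarith
      have hnum : -1 ≤ Real.exp (b * L * u * (2 * a - L * u)) - 1 := by
        have := (Real.exp_pos (b * L * u * (2 * a - L * u))).le; linarith
      rw [le_div_iff₀ hpos]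
      have h1 : L / (2*ε) * (2*ε/L) = 1 := by field_simp
      nlinarith [mul_le_mul_of_nonneg_left hu2 hC.le]

lemma rodG_big {L b a ε u : ℝ} (hL : 0 < L) (hε : 0 < ε) (ha : ε ≤ a) (hb : 0 ≤ b)
    (hu1 : ε / (2 * L) ≤ u) (hu2 : u ≤ ε / L) :
    (Real.exp (b * ε ^ 2 / 2) - 1) * (L / ε) ≤ rodG L b a u := by
  have hupos : 0 < u := lt_of_lt_of_le (by positivity) hu1
  rw [rodG_eq L b a hupos.ne']
  have hLu : L * u ≤ ε := by
    have := (le_div_iff₀ hL).1 hu2; linarith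
  have h2 : ε ≤ 2 * a - L * u := by linarith
  have h3 : ε / 2 ≤ L * u := by
    have := (div_le_iff₀ (by positivity : (0:ℝ) < 2 * L)).1 hu1; nlinarith
  have ht : b * ε ^ 2 / 2 ≤ b * L * u * (2 * a - L * u) := by
    calc b * ε ^ 2 / 2 = b * (ε/2) * ε := by ring
    _ ≤ b * (L * u) * (2 * a - L * u) := by
        apply mul_le_mul (mul_le_mul le_rfl h3 (by positivity) (by positivity)) h2 hε.le
        positivity
    _ = b * L * u * (2 * a - L * u) := by ring
  have hnum0 : 0 ≤ Real.exp (b * ε ^ 2 / 2) - 1 := by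
    have : (1:ℝ) ≤ Real.exp (b * ε^2/2) := Real.one_le_exp (by positivity); linarith
  have hinv : L / ε ≤ 1 / u := by
    rw [div_le_div_iff₀ hε hupos]; linarith
  calc (Real.exp (b * ε ^ 2 / 2) - 1) * (L / ε)
      ≤ (Real.exp (b * ε ^ 2 / 2) - 1) * (1 / u) := by gcongr
    _ = (Real.exp (b * ε ^ 2 / 2) - 1) / u := by ring
    _ ≤ (Real.exp (b * L * u * (2 * a - L * u)) - 1) / u := by
        gcongr

lemma rod_eq_rodG {L b a x θ : ℝ} (h : x * Real.sin θ ≠ 0) :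
    rodIntegrand L b a x θ = rodG L b a (x * Real.sin θ) := by
  rw [rodIntegrand, if_neg h, rodG_eq L b a h]
  ring_nf

lemma sin_zero_null : MeasureTheory.volume {θ : ℝ | Real.sin θ = 0} = 0 := by
  have hsub : {θ : ℝ | Real.sin θ = 0} ⊆ Set.range (fun n : ℤ => (n:ℝ) * π) := by
    intro θ hθ
    rcases Real.sin_eq_zero_iff.1 hθ with ⟨n, hn⟩
    exact ⟨n, hn⟩
  exact MeasureTheory.measure_mono_null hsub ((Set.countable_range _).measure_zero _)

lemma inner_eq {L b a : ℝ} {x : ℝ} (hx : x ≠ 0) :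
    ∫ θ in (0:ℝ)..(2*π), rodIntegrand L b a x θ
      = ∫ θ in (0:ℝ)..(2*π), rodG L b a (x * Real.sin θ) := by
  apply intervalIntegral.integral_congr_ae
  filter_upwards [MeasureTheory.measure_eq_zero_iff_ae_notMem.mp sin_zero_null] with θ hθ _
  exact rod_eq_rodG (mul_ne_zero hx hθ)

lemma outer_eq (L b a : ℝ) :
    (∫ x in (0:ℝ)..L, ∫ θ in (0:ℝ)..(2*π), rodIntegrand L b a x θ)
      = ∫ x in (0:ℝ)..L, ∫ θ in (0:ℝ)..(2*π), rodG L b a (x * Real.sin θ) := by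
  apply intervalIntegral.integral_congr_ae
  filter_upwards [MeasureTheory.measure_eq_zero_iff_ae_notMem.mp
    (MeasureTheory.measure_singleton (0:ℝ))] with x hx _
  exact inner_eq hx

lemma rod_periodic (L b a x : ℝ) :
    Function.Periodic (fun θ => rodIntegrand L b a x θ) (2*π) := by
  intro θ
  simp only [rodIntegrand, Real.sin_add_two_pi]

lemma rod_neg (L b a x θ : ℝ) :
    rodIntegrand L b (-a) x θ = - rodIntegrand L b a x (θ + π) := by
  rw [rodIntegrand, rodIntegrand, Real.sin_add_pi]
  by_cases h : x * Real.sin θ = 0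
  · rw [if_pos h, if_pos (by rw [mul_neg, h, neg_zero])]
    ring
  · rw [if_neg h, if_neg (by rw [mul_neg]; exact neg_ne_zero.2 h)]
    have hA : b * L * x * Real.sin θ * (2 * (-a) - L * x * Real.sin θ)
        = b * L * x * (-Real.sin θ) * (2 * a - L * x * (-Real.sin θ)) := by ring
    rw [hA, show x * -Real.sin θ = -(x * Real.sin θ) from by ring, div_neg, neg_neg]

lemma inner_neg (L b a x : ℝ) :
    ∫ θ in (0:ℝ)..(2*π), rodIntegrand L b (-a) x θ
      = - ∫ θ in (0:ℝ)..(2*π), rodIntegrand L b a x θ := by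
  calc ∫ θ in (0:ℝ)..(2*π), rodIntegrand L b (-a) x θ
      = ∫ θ in (0:ℝ)..(2*π), - rodIntegrand L b a x (θ + π) := by
        simp_rw [rod_neg]
    _ = - ∫ θ in (0:ℝ)..(2*π), rodIntegrand L b a x (θ + π) := intervalIntegral.integral_neg
    _ = - ∫ θ in (0+π:ℝ)..(2*π+π), rodIntegrand L b a x θ := by
        rw [intervalIntegral.integral_comp_add_right]
    _ = - ∫ θ in (0:ℝ)..(2*π), rodIntegrand L b a x θ := by
        have := (rod_periodic L b a x).intervalIntegral_add_eq π 0
        rw [show (0+π:ℝ) = π by ring, show (2*π+π:ℝ) = π + 2*π by ring, this, zero_add]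

lemma outer_neg (L b a : ℝ) :
    (∫ x in (0:ℝ)..L, ∫ θ in (0:ℝ)..(2*π), rodIntegrand L b (-a) x θ)
      = - ∫ x in (0:ℝ)..L, ∫ θ in (0:ℝ)..(2*π), rodIntegrand L b a x θ := by
  simp_rw [inner_neg]
  exact intervalIntegral.integral_neg

set_option maxHeartbeats 1000000 in
lemma key_pos (L ε : ℝ) (hL : 0 < L) (hε : 0 < ε) (hεL : ε ≤ L^2) :
    ∀ a b : ℝ, ε ≤ a → (2/ε^2) * Real.log (1 + 16*L^2/ε) + 1 ≤ b →
      0 < ∫ x in (0:ℝ)..L, ∫ θ in (0:ℝ)..(2*π), rodG L b a (x * Real.sin θ) := by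
  intro a b ha hb
  have hlog : 0 ≤ Real.log (1 + 16*L^2/ε) := Real.log_nonneg (by nlinarith [sq_nonneg L, mul_pos (mul_pos (by norm_num : (0:ℝ)<16) (pow_pos hL 2)) (inv_pos.2 hε), div_nonneg (by positivity : (0:ℝ) ≤ 16*L^2) hε.le])
  have hb0 : (0:ℝ) < b := by nlinarith [mul_nonneg (by positivity : (0:ℝ) ≤ 2/ε^2) hlog]
  set C : ℝ := L / (2*ε) with hCdef
  have hC : 0 < C := by positivity
  set M : ℝ := (Real.exp (b * ε ^ 2 / 2) - 1) * (L / ε) with hMdef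
  have hM0 : 0 ≤ M := by
    have : (1:ℝ) ≤ Real.exp (b * ε^2/2) := Real.one_le_exp (by positivity)
    have h2 : (0:ℝ) ≤ L/ε := by positivity
    nlinarith
  -- the continuous integrand
  have hcont : Continuous (Function.uncurry fun x θ : ℝ => rodG L b a (x * Real.sin θ)) := by
    apply (continuous_rodG L b a).comp
    exact (continuous_fst.mul (Real.continuous_sin.comp continuous_snd))
  have hcont2 : ∀ x : ℝ, Continuous (fun θ => rodG L b a (x * Real.sin θ)) := fun x =>
    (continuous_rodG L b a).comp (continuous_const.mul Real.continuous_sin)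
  set H : ℝ → ℝ := fun x => ∫ θ in (0:ℝ)..(2*π), rodG L b a (x * Real.sin θ) with hHdef
  have hHcont : Continuous H :=
    intervalIntegral.continuous_parametric_intervalIntegral_of_continuous' hcont 0 (2*π)
  have hpi := Real.pi_pos
  have hconst : ∀ (c p q : ℝ), IntervalIntegrable (fun _ : ℝ => c) MeasureTheory.volume p q :=
    fun c p q => _root_.intervalIntegrable_const (μ := MeasureTheory.volume)
  -- trivial lower bound for H
  have hH1 : ∀ x : ℝ, -(2*π*C) ≤ H x := by
    intro x
    have := intervalIntegral.integral_mono_on (by positivity : (0:ℝ) ≤ 2*π)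
      (hconst (-C) _ _)
      ((hcont2 x).intervalIntegrable 0 (2*π))
      (fun θ _ => rodG_lower hL hε ha hb0 (x * Real.sin θ))
    rw [intervalIntegral.integral_const, smul_eq_mul] at this
    calc -(2*π*C) = (2*π - 0) * (-C) := by ring
    _ ≤ H x := this
  -- good-interval lower bound for H
  set x₁ : ℝ := 5*ε/(8*L) with hx1def
  set x₂ : ℝ := ε/L with hx2def
  have hx1pos : 0 < x₁ := by positivity
  have hx12 : x₁ ≤ x₂ := by rw [hx1def, hx2def, div_le_div_iff₀ (by positivity) hL]; nlinarith
  have hx2L : x₂ ≤ L := by rw [hx2def, div_le_iff₀ hL]; nlinarith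
  have hsin : ∀ θ ∈ Set.Icc (π/3) (π/2), (4:ℝ)/5 ≤ Real.sin θ ∧ Real.sin θ ≤ 1 := by
    intro θ hθ
    refine ⟨?_, Real.sin_le_one θ⟩
    have h1 : Real.sin (π/3) ≤ Real.sin θ :=
      Real.strictMonoOn_sin.monotoneOn ⟨by linarith, by linarith⟩
        ⟨by linarith [hθ.1], hθ.2⟩ hθ.1
    have h2 : (8:ℝ)/5 ≤ Real.sqrt 3 := by
      rw [show (8:ℝ)/5 = Real.sqrt ((8/5)^2) from (Real.sqrt_sq (by norm_num)).symm]
      exact Real.sqrt_le_sqrt (by norm_num)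
    rw [Real.sin_pi_div_three] at h1
    linarith
  have hH2 : ∀ x ∈ Set.Icc x₁ x₂, π/6 * M - 2*π*C ≤ H x := by
    intro x hx
    have hx0 : 0 < x := lt_of_lt_of_le hx1pos hx.1
    have hIa := (hcont2 x).intervalIntegrable (μ := MeasureTheory.volume) (0:ℝ) (π/3)
    have hIb := (hcont2 x).intervalIntegrable (μ := MeasureTheory.volume) (π/3) (π/2)
    have hIc := (hcont2 x).intervalIntegrable (μ := MeasureTheory.volume) (π/2) (2*π)
    have hsplit : H x = (∫ θ in (0:ℝ)..(π/3), rodG L b a (x * Real.sin θ))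
        + (∫ θ in (π/3)..(π/2), rodG L b a (x * Real.sin θ))
        + (∫ θ in (π/2)..(2*π), rodG L b a (x * Real.sin θ)) := by
      rw [hHdef]
      rw [intervalIntegral.integral_add_adjacent_intervals hIa hIb,
        intervalIntegral.integral_add_adjacent_intervals (hIa.trans hIb) hIc]
    have hba : (π/3 - 0) * (-C) ≤ ∫ θ in (0:ℝ)..(π/3), rodG L b a (x * Real.sin θ) := by
      have := intervalIntegral.integral_mono_on (by positivity : (0:ℝ) ≤ π/3)
        (hconst (-C) _ _) hIa
        (fun θ _ => rodG_lower hL hε ha hb0 (x * Real.sin θ))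
      rwa [intervalIntegral.integral_const, smul_eq_mul] at this
    have hbc : (2*π - π/2) * (-C) ≤ ∫ θ in (π/2)..(2*π), rodG L b a (x * Real.sin θ) := by
      have := intervalIntegral.integral_mono_on (by linarith : π/2 ≤ 2*π)
        (hconst (-C) _ _) hIc
        (fun θ _ => rodG_lower hL hε ha hb0 (x * Real.sin θ))
      rwa [intervalIntegral.integral_const, smul_eq_mul] at this
    have hpt : ∀ θ ∈ Set.Icc (π/3) (π/2), M ≤ rodG L b a (x * Real.sin θ) := by
      intro θ hθ
      obtain ⟨hs1, hs2⟩ := hsin θ hθ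
      apply rodG_big hL hε ha hb0.le
      · calc ε/(2*L) = x₁ * (4/5) := by rw [hx1def]; field_simp; ring
          _ ≤ x * Real.sin θ := mul_le_mul hx.1 hs1 (by norm_num) hx0.le
      · calc x * Real.sin θ
            ≤ x₂ * 1 := mul_le_mul hx.2 hs2
              (Real.sin_nonneg_of_nonneg_of_le_pi (by linarith [hθ.1]) (by linarith [hθ.2]))
              (by positivity)
          _ = ε/L := by rw [mul_one]
    have hbb : (π/2 - π/3) * M ≤ ∫ θ in (π/3)..(π/2), rodG L b a (x * Real.sin θ) := by
      have := intervalIntegral.integral_mono_on (by linarith : π/3 ≤ π/2)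
        (hconst M _ _) hIb hpt
      rwa [intervalIntegral.integral_const, smul_eq_mul] at this
    rw [hsplit]
    nlinarith [hC.le, hM0]
  -- outer integral
  have hHIa := hHcont.intervalIntegrable (μ := MeasureTheory.volume) (0:ℝ) x₁
  have hHIb := hHcont.intervalIntegrable (μ := MeasureTheory.volume) x₁ x₂
  have hHIc := hHcont.intervalIntegrable (μ := MeasureTheory.volume) x₂ L
  have hsplit : (∫ x in (0:ℝ)..L, H x)
      = (∫ x in (0:ℝ)..x₁, H x) + (∫ x in x₁..x₂, H x) + (∫ x in x₂..L, H x) := by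
    rw [intervalIntegral.integral_add_adjacent_intervals hHIa hHIb,
      intervalIntegral.integral_add_adjacent_intervals (hHIa.trans hHIb) hHIc]
  have hA : (x₁ - 0) * (-(2*π*C)) ≤ ∫ x in (0:ℝ)..x₁, H x := by
    have := intervalIntegral.integral_mono_on hx1pos.le
      (hconst (-(2*π*C)) _ _) hHIa (fun x _ => hH1 x)
    rwa [intervalIntegral.integral_const, smul_eq_mul] at this
  have hBnd : (x₂ - x₁) * (π/6 * M - 2*π*C) ≤ ∫ x in x₁..x₂, H x := by
    have := intervalIntegral.integral_mono_on hx12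
      (hconst (π/6 * M - 2*π*C) _ _) hHIb (fun x hx => hH2 x hx)
    rwa [intervalIntegral.integral_const, smul_eq_mul] at this
  have hCc : (L - x₂) * (-(2*π*C)) ≤ ∫ x in x₂..L, H x := by
    have := intervalIntegral.integral_mono_on hx2L
      (hconst (-(2*π*C)) _ _) hHIc (fun x _ => hH1 x)
    rwa [intervalIntegral.integral_const, smul_eq_mul] at this
  -- arithmetic conclusion
  have hx21 : x₂ - x₁ = 3*ε/(8*L) := by rw [hx1def, hx2def]; field_simp; ring
  have hMbig : 16 * L^2 / ε < Real.exp (b * ε^2/2) - 1 := by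
    have h1 : Real.log (1 + 16*L^2/ε) + ε^2/2 ≤ b * ε^2/2 := by
      have h2 : ((2/ε^2) * Real.log (1 + 16*L^2/ε) + 1) * (ε^2/2) ≤ b * (ε^2/2) := by
        apply mul_le_mul_of_nonneg_right hb (by positivity)
      calc Real.log (1 + 16*L^2/ε) + ε^2/2
          = ((2/ε^2) * Real.log (1 + 16*L^2/ε) + 1) * (ε^2/2) := by field_simp
        _ ≤ b * (ε^2/2) := h2
        _ = b * ε^2/2 := by ring
    have h3 : 1 + 16*L^2/ε < Real.exp (b * ε^2/2) := by
      calc 1 + 16*L^2/ε = Real.exp (Real.log (1 + 16*L^2/ε)) := by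
            rw [Real.exp_log (by positivity)]
        _ < Real.exp (b * ε^2/2) := by
            apply Real.exp_lt_exp.2; nlinarith [sq_nonneg ε]
    linarith
  have hfinal : 0 < (x₂ - x₁) * (π/6 * M) - 2*π*C*L := by
    rw [hx21, hMdef, hCdef]
    have e1 : 3*ε/(8*L) * (π/6 * ((Real.exp (b * ε^2/2) - 1) * (L/ε)))
        = π/16 * (Real.exp (b * ε^2/2) - 1) := by field_simp; ring
    have e2 : 2*π*(L/(2*ε))*L = π * L^2/ε := by field_simp
    rw [e1, e2]
    have : π * (16*L^2/ε) < π * (Real.exp (b * ε^2/2) - 1) :=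
      mul_lt_mul_of_pos_left hMbig hpi
    calc (0:ℝ) = π/16 * (16*L^2/ε) - π*L^2/ε := by field_simp; ring
    _ < π/16 * (Real.exp (b * ε^2/2) - 1) - π*L^2/ε := by nlinarith
  calc (0:ℝ) < (x₂ - x₁) * (π/6 * M) - 2*π*C*L := hfinal
  _ ≤ (∫ x in (0:ℝ)..x₁, H x) + (∫ x in x₁..x₂, H x) + (∫ x in x₂..L, H x) := by
      nlinarith [hA, hBnd, hCc, hC.le, hM0, hx1pos.le, hx12, hx2L]
  _ = ∫ x in (0:ℝ)..L, H x := hsplit.symm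

theorem zeros_tend_to_zero (L : ℝ) (hL : 0 < L)
    (b : ℕ → ℝ) (hb : Tendsto b atTop atTop) (a : ℕ → ℝ)
    (ha : ∀ n, |a n| ≤ L ^ 2)
    (hzero : ∀ n,
      (∫ x in (0 : ℝ)..L, ∫ θ in (0 : ℝ)..(2 * π), rodIntegrand L (b n) (a n) x θ) = 0) :
    Tendsto a atTop (nhds 0) := by
  rw [Metric.tendsto_atTop]
  intro ε hε
  set ε₀ : ℝ := min ε (L^2) with hε₀def
  have hε₀ : 0 < ε₀ := lt_min hε (by positivity)
  have hε₀L : ε₀ ≤ L^2 := min_le_right _ _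
  set B : ℝ := (2/ε₀^2) * Real.log (1 + 16*L^2/ε₀) + 1 with hBdef
  obtain ⟨N, hN⟩ := (hb.eventually_ge_atTop B).exists_forall_of_atTop
  refine ⟨N, fun n hn => ?_⟩
  rw [Real.dist_eq, sub_zero]
  by_contra hcon
  push_neg at hcon
  have hε₀a : ε₀ ≤ |a n| := le_trans (min_le_left _ _) hcon
  have hkey := key_pos L ε₀ hL hε₀ hε₀L
  rcases le_or_gt 0 (a n) with hsign | hsign
  · have haa : ε₀ ≤ a n := by rwa [abs_of_nonneg hsign] at hε₀a
    have hpos := hkey (a n) (b n) haa (hN n hn)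
    have hz := hzero n
    rw [outer_eq] at hz
    linarith
  · have haa : ε₀ ≤ -(a n) := by rwa [abs_of_neg hsign] at hε₀a
    have hz2 : (∫ x in (0:ℝ)..L, ∫ θ in (0:ℝ)..(2*π), rodIntegrand L (b n) (-(a n)) x θ) = 0 := by
      rw [outer_neg, hzero n, neg_zero]
    have hpos := hkey (-(a n)) (b n) haa (hN n hn)
    rw [outer_eq] at hz2
    linarith
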